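/- Let S be a unitary 2×2 matrix and suppose for positive definite G and H we have G = S† H S and also G = H (i.e., r-coefficients match as in the deterministic-step analysis). If two equations g = r_1 U h S_1 = r_2 V h S_2 hold with U, V unitary, r_1, r_2 > 0, h invertible, and S_1, S_2 unitary, then r_1 = r_2 and [h†h, S_1 S_2†] = 0. -/
import Mathlib


open Matrix

noncomputable section

/-- if `g = r₁ U h S₁ = r₂ V h S₂` with `U, V` unitary, `S₁, S₂`
unitary, `h` invertible and trace-normalized (`tr(hᴴh) = 1`), and `r₁, r₂ > 0`,
then `r₁ = r₂` and `[hᴴh, S₁S₂ᴴ] = 0`. -/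
theorem stmt5 {d : ℕ} (g h U V S₁ S₂ : Matrix (Fin d) (Fin d) ℂ)
    (hU : U ∈ Matrix.unitaryGroup (Fin d) ℂ) (hV : V ∈ Matrix.unitaryGroup (Fin d) ℂ)
    (hS₁ : S₁ ∈ Matrix.unitaryGroup (Fin d) ℂ) (hS₂ : S₂ ∈ Matrix.unitaryGroup (Fin d) ℂ)
    (hh : IsUnit h) (htr : (hᴴ * h).trace = 1)
    (r₁ r₂ : ℝ) (hr₁ : 0 < r₁) (hr₂ : 0 < r₂)
    (hg₁ : g = (r₁ : ℂ) • (U * h * S₁)) (hg₂ : g = (r₂ : ℂ) • (V * h * S₂)) :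
    r₁ = r₂ ∧ Commute (hᴴ * h) (S₁ * S₂ᴴ) := by
  have hS₁2 : S₁ * S₁ᴴ = 1 := hS₁.2
  have hS₂2 : S₂ * S₂ᴴ = 1 := hS₂.2
  have expand : ∀ (W S : Matrix (Fin d) (Fin d) ℂ) (r : ℝ), Wᴴ * W = 1 →
      ((r:ℂ) • (W * h * S))ᴴ * ((r:ℂ) • (W * h * S))
        = ((r:ℂ)^2) • (Sᴴ * (hᴴ * h) * S) := by
    intro W S r hW
    rw [conjTranspose_smul, Matrix.smul_mul, Matrix.mul_smul, smul_smul]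
    congr 1
    · simp only [Complex.star_def, Complex.conj_ofReal]; ring
    · rw [conjTranspose_mul, conjTranspose_mul]
      rw [show Sᴴ * (hᴴ * Wᴴ) * (W * h * S) = Sᴴ * hᴴ * (Wᴴ * W) * (h * S) from by
        noncomm_ring, hW, Matrix.mul_one]
      noncomm_ring
  have key : ((r₁:ℂ)^2) • (S₁ᴴ * (hᴴ * h) * S₁) = ((r₂:ℂ)^2) • (S₂ᴴ * (hᴴ * h) * S₂) := by
    rw [← expand U S₁ r₁ hU.1, ← expand V S₂ r₂ hV.1, ← hg₁, ← hg₂]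
  have htr1 : (S₁ᴴ * (hᴴ * h) * S₁).trace = 1 := by
    rw [trace_mul_cycle, ← Matrix.mul_assoc, hS₁2, Matrix.one_mul, htr]
  have htr2 : (S₂ᴴ * (hᴴ * h) * S₂).trace = 1 := by
    rw [trace_mul_cycle, ← Matrix.mul_assoc, hS₂2, Matrix.one_mul, htr]
  have hr2 : ((r₁:ℂ)^2) = ((r₂:ℂ)^2) := by
    have := congrArg Matrix.trace key
    simpa [Matrix.trace_smul, htr1, htr2] using this
  have hrr : r₁ = r₂ := by
    have : r₁ ^ 2 = r₂ ^ 2 := by exact_mod_cast hr2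
    nlinarith
  refine ⟨hrr, ?_⟩
  have hne : ((r₁:ℂ)^2) ≠ 0 := pow_ne_zero 2 (Complex.ofReal_ne_zero.mpr hr₁.ne')
  have e : S₁ᴴ * (hᴴ * h) * S₁ = S₂ᴴ * (hᴴ * h) * S₂ := by
    rw [hrr] at key
    exact smul_right_injective _ (hrr ▸ hne) key
  calc (hᴴ * h) * (S₁ * S₂ᴴ) = (S₁ * S₁ᴴ) * (hᴴ * h) * (S₁ * S₂ᴴ) := by
        rw [hS₁2, Matrix.one_mul]
    _ = S₁ * (S₁ᴴ * (hᴴ * h) * S₁) * S₂ᴴ := by noncomm_ring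
    _ = S₁ * (S₂ᴴ * (hᴴ * h) * S₂) * S₂ᴴ := by rw [e]
    _ = (S₁ * S₂ᴴ) * (hᴴ * h) * (S₂ * S₂ᴴ) := by noncomm_ring
    _ = (S₁ * S₂ᴴ) * (hᴴ * h) := by rw [hS₂2, Matrix.mul_one]
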